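/- Let G = (V,E) be an undirected graph with V = {1,...,n}, and define p(v) = max{u ∈ N(v) : u < v} (or 0 if no neighbor of v is smaller than v). Then the identity labeling is a valid DFS numbering of G if and only if there exists no conflicting pair, i.e., no vertex v and edge {u,w} ∈ E with p(v) < u < v < w. -/

import Mathlib

open Classical

/-- `adj` is (the adjacency relation of) a simple undirected graph on vertex set `{1,…,n}`. -/
def IsGraphOn (n : ℕ) (adj : ℕ → ℕ → Prop) : Prop :=
  Symmetric adj ∧ ∀ u v, adj u v → 1 ≤ u ∧ u ≤ n ∧ 1 ≤ v ∧ v ≤ n ∧ u ≠ v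

/-- `p(v)`: the largest neighbour of `v` that is smaller than `v`, and `0` if none exists
(`sSup ∅ = 0` in `ℕ`). -/
noncomputable def par (adj : ℕ → ℕ → Prop) (v : ℕ) : ℕ :=
  sSup {u | adj u v ∧ u < v}

/-- `(v, {u,w})` is a conflicting pair: `{u,w}` is an edge and `p(v) < u < v < w`. -/
def Conflict (adj : ℕ → ℕ → Prop) (v u w : ℕ) : Prop :=
  adj u w ∧ par adj v < u ∧ u < v ∧ v < w

/-- One step of a (nondeterministic) depth-first search.  The state consists of the list of
already discovered vertices, in order of discovery and together with the recorded (possibly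
virtual) parent from which each was discovered, and of the stack of active vertices
(the white path, top first). -/
inductive DFSStep (n : ℕ) (adj : ℕ → ℕ → Prop) :
    List (ℕ × ℕ) × List ℕ → List (ℕ × ℕ) × List ℕ → Prop
  | root (v : ℕ) (order : List (ℕ × ℕ)) (hv1 : 1 ≤ v) (hv2 : v ≤ n)
      (hnd : v ∉ order.map Prod.fst) :
      DFSStep n adj (order, []) (order ++ [(v, 0)], [v])
  | descend (v t : ℕ) (order : List (ℕ × ℕ)) (stack : List ℕ)
      (hadj : adj t v) (hnd : v ∉ order.map Prod.fst) :
      DFSStep n adj (order, t :: stack) (order ++ [(v, t)], v :: t :: stack)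
  | backtrack (t : ℕ) (order : List (ℕ × ℕ)) (stack : List ℕ)
      (hall : ∀ u, adj t u → u ∈ order.map Prod.fst) :
      DFSStep n adj (order, t :: stack) (order, stack)

/-- A complete DFS run discovering the vertices in the order given by the list `order`. -/
def DFSRun (n : ℕ) (adj : ℕ → ℕ → Prop) (order : List (ℕ × ℕ)) : Prop :=
  Relation.ReflTransGen (DFSStep n adj) ([], []) (order, [])

/-- The labelling `f` is a valid DFS numbering of the graph: some DFS run discovers the
vertices in the order of increasing labels `1, 2, …, n`. -/
def ValidDFSLabel (n : ℕ) (adj : ℕ → ℕ → Prop) (f : ℕ → ℕ) : Prop :=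
  ∃ order, DFSRun n adj order ∧ (order.map Prod.fst).map f = List.range' 1 n

/-- The identity labelling on `{1,…,n}` is a valid DFS numbering of the graph. -/
def ValidDFS (n : ℕ) (adj : ℕ → ℕ → Prop) : Prop :=
  ValidDFSLabel n adj id

/-- The graph is connected (on its vertex set `{1,…,n}`). -/
def ConnOn (n : ℕ) (adj : ℕ → ℕ → Prop) : Prop :=
  ∀ u v, 1 ≤ u → u ≤ n → 1 ≤ v → v ≤ n → Relation.ReflTransGen adj u v

/-- The degree of a vertex. -/
noncomputable def degree (adj : ℕ → ℕ → Prop) (v : ℕ) : ℕ :=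
  Set.ncard {u | adj u v}

/-- The size `|E △ E'|` of the symmetric difference of the edge sets of two graphs
(given by symmetric adjacency relations). -/
noncomputable def edgeDiff (a b : ℕ → ℕ → Prop) : ℕ :=
  Set.ncard {p : ℕ × ℕ | p.1 < p.2 ∧ ¬(a p.1 p.2 ↔ b p.1 p.2)}

section AuxProof

variable {n : ℕ} {adj : ℕ → ℕ → Prop}

lemma le_par {t v : ℕ} (h : adj t v) (hlt : t < v) : t ≤ par adj v :=
  le_csSup ⟨v, fun x hx => hx.2.le⟩ ⟨h, hlt⟩

lemma par_mem {v : ℕ} (adj : ℕ → ℕ → Prop) (h : par adj v ≠ 0) :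
    adj (par adj v) v ∧ par adj v < v := by
  have hne : {u | adj u v ∧ u < v}.Nonempty := by
    by_contra hc
    rw [Set.not_nonempty_iff_eq_empty] at hc
    rw [par, hc] at h
    simp at h
  exact Nat.sSup_mem hne ⟨v, fun x hx => hx.2.le⟩

lemma sublist_snoc {l₁ : List ℕ} {l₂ : List (ℕ × ℕ)}
    (h : List.Sublist l₁.reverse (l₂.map Prod.fst)) (v t : ℕ) :
    List.Sublist (v :: l₁).reverse ((l₂ ++ [(v, t)]).map Prod.fst) := by
  rw [List.reverse_cons, List.map_append]
  have h2 : List.map Prod.fst [(v, t)] = [v] := by simp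
  rw [h2]
  exact h.append (List.Sublist.refl _)

lemma dropWhile_head_le {m : ℕ} :
    ∀ (s : List ℕ) (t : ℕ) (r' : List ℕ),
      s.dropWhile (fun x => decide (m < x)) = t :: r' → t ≤ m
  | [] => by intro t r'; simp
  | a :: s => by
      intro t r' h
      rw [List.dropWhile_cons] at h
      split at h
      · exact dropWhile_head_le s _ _ h
      · next hc =>
          cases h
          simpa using hc

/-- Structural invariant of DFS states: the reversed stack is a subsequence of the
discovery order, and every discovered vertex not on the stack is fully processed. -/
def DFSInv (adj : ℕ → ℕ → Prop) (st : List (ℕ × ℕ) × List ℕ) : Prop :=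
  List.Sublist st.2.reverse (st.1.map Prod.fst) ∧
    ∀ u, u ∈ st.1.map Prod.fst → u ∉ st.2 → ∀ x, adj u x → x ∈ st.1.map Prod.fst

lemma inv_step {a b : List (ℕ × ℕ) × List ℕ} (h : DFSStep n adj a b) (ha : DFSInv adj a) :
    DFSInv adj b := by
  obtain ⟨h1, h2⟩ := ha
  cases h with
  | root v order hv1 hv2 hnd =>
      constructor
      · exact sublist_snoc (by simpa using h1) v 0
      · intro u hu hus x hx
        simp only [List.map_append, List.mem_append] at hu ⊢
        rcases hu with hu | hu
        · exact Or.inl (h2 u hu (by simp) x hx)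
        · simp at hu; subst hu; exact absurd (by simp : u ∈ [u]) hus
  | descend v t order stack hadj hnd =>
      constructor
      · exact sublist_snoc h1 v t
      · intro u hu hus x hx
        simp only [List.map_append, List.mem_append] at hu ⊢
        rcases hu with hu | hu
        · refine Or.inl (h2 u hu ?_ x hx)
          intro hmem; exact hus (List.mem_cons_of_mem _ hmem)
        · simp at hu; subst hu; exact absurd List.mem_cons_self hus
  | backtrack t order stack hall =>
      constructor
      · exact (List.reverse_sublist.mpr (List.sublist_cons_self t stack)).trans h1
      · intro u hu hus x hx
        by_cases hut : u = t
        · subst hut; exact hall x hx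
        · exact h2 u hu (by simp [hut, hus]) x hx

lemma inv_run {a : List (ℕ × ℕ) × List ℕ}
    (h : Relation.ReflTransGen (DFSStep n adj) ([], []) a) : DFSInv adj a := by
  induction h with
  | refl => exact ⟨by simp, by simp⟩
  | tail _ hstep ih => exact inv_step hstep ih

lemma step_prefix {a b : List (ℕ × ℕ) × List ℕ} (h : DFSStep n adj a b) : a.1 <+: b.1 := by
  cases h with
  | root v order hv1 hv2 hnd => exact List.prefix_append _ _
  | descend v t order stack hadj hnd => exact List.prefix_append _ _
  | backtrack t order stack hall => exact List.prefix_refl _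

lemma run_prefix {a b : List (ℕ × ℕ) × List ℕ}
    (h : Relation.ReflTransGen (DFSStep n adj) a b) : a.1 <+: b.1 := by
  induction h with
  | refl => exact List.prefix_refl _
  | tail _ hstep ih => exact ih.trans (step_prefix hstep)

lemma exists_push {a c : List (ℕ × ℕ) × List ℕ} {v : ℕ}
    (h : Relation.ReflTransGen (DFSStep n adj) a c)
    (hv : v ∈ c.1.map Prod.fst) (ha : v ∉ a.1.map Prod.fst) :
    ∃ b b', Relation.ReflTransGen (DFSStep n adj) a b ∧ DFSStep n adj b b' ∧
      Relation.ReflTransGen (DFSStep n adj) b' c ∧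
      v ∉ b.1.map Prod.fst ∧ v ∈ b'.1.map Prod.fst := by
  induction h with
  | refl => exact absurd hv ha
  | @tail b c hab hbc ih =>
      by_cases hvb : v ∈ b.1.map Prod.fst
      · obtain ⟨b₀, b₀', h1, h2, h3, h4, h5⟩ := ih hvb
        exact ⟨b₀, b₀', h1, h2, h3.tail hbc, h4, h5⟩
      · exact ⟨b, c, hab, hbc, Relation.ReflTransGen.refl, hvb, hv⟩

/-- Backtracking a top segment of the stack. -/
lemma pops (o : List (ℕ × ℕ)) (m : ℕ) :
    ∀ s : List ℕ, (∀ t ∈ s, m < t → ∀ x, adj t x → x ∈ o.map Prod.fst) →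
    Relation.ReflTransGen (DFSStep n adj) (o, s) (o, s.dropWhile (fun t => decide (m < t)))
  | [], _ => Relation.ReflTransGen.refl
  | t :: s, h => by
      by_cases htm : m < t
      · rw [List.dropWhile_cons_of_pos (by simpa using htm)]
        exact Relation.ReflTransGen.head
          (DFSStep.backtrack t o s (h t List.mem_cons_self htm))
          (pops o m s fun t' ht' => h t' (List.mem_cons_of_mem _ ht'))
      · rw [List.dropWhile_cons_of_neg (by simpa using htm)]

lemma mem_dropWhile {m t : ℕ} {s : List ℕ} (hts : t ∈ s) (htm : t ≤ m) :
    t ∈ s.dropWhile (fun t => decide (m < t)) := by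
  rw [← List.takeWhile_append_dropWhile (p := fun t => decide (m < t)) (l := s), List.mem_append] at hts
  rcases hts with hts | hts
  · have := List.mem_takeWhile_imp hts
    simp at this; omega
  · exact hts

lemma prefix_facts {l : List ℕ} {v n : ℕ} (h : l ++ [v] <+: List.range' 1 n) :
    (∀ x ∈ l, x < v) ∧ (∀ x, 1 ≤ x → x < v → x ∈ l) := by
  have hpwr : (List.range' 1 n).Pairwise (· < ·) := List.pairwise_lt_range' (s := 1) (n := n)
  have hvn : v ∈ List.range' 1 n := h.sublist.subset (by simp)
  simp only [List.mem_range'_1] at hvn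
  obtain ⟨t', ht'⟩ := id h
  constructor
  · intro x hx
    have := hpwr.sublist h.sublist
    rw [List.pairwise_append] at this
    exact this.2.2 x hx v (by simp)
  · intro x hx1 hxv
    have hxr : x ∈ List.range' 1 n := by simp only [List.mem_range'_1]; omega
    rw [← ht', List.append_assoc, List.mem_append, List.mem_append] at hxr
    rcases hxr with hx | hx | hx
    · exact hx
    · rw [List.mem_singleton] at hx; omega
    · exfalso
      rw [← ht', List.pairwise_append] at hpwr
      have := hpwr.2.2 v (by simp) x hx
      omega

lemma build (hG : IsGraphOn n adj) (hnc : ¬∃ v u w, Conflict adj v u w) :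
    ∀ k, k ≤ n → ∃ (o : List (ℕ × ℕ)) (s : List ℕ),
      Relation.ReflTransGen (DFSStep n adj) ([], []) (o, s) ∧
      o.map Prod.fst = List.range' 1 k ∧ s.Pairwise (· > ·) ∧
      (∀ t ∈ s, 1 ≤ t ∧ t ≤ k) ∧
      (∀ t x, 1 ≤ t → t ≤ k → adj t x → k < x → t ∈ s) := by
  intro k
  induction k with
  | zero => exact fun _ => ⟨[], [], Relation.ReflTransGen.refl, by simp, by simp, by simp,
      fun t x h1 h2 _ _ => by omega⟩
  | succ k ih =>
      intro hkn
      obtain ⟨o, s, hrun, ho, hpw, hbd, hact⟩ := ih (by omega)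
      set v := k + 1 with hv
      set m := par adj v with hm
      -- every stack element above `m` is fully processed
      have hpop : ∀ t ∈ s, m < t → ∀ x, adj t x → x ≤ k := by
        intro t hts htm x hax
        by_contra hc
        push_neg at hc
        obtain ⟨ht1, ht2⟩ := hbd t hts
        rcases Nat.lt_or_ge x v with hxv | hxv
        · -- x = k + 1 impossible: then t ≤ m
          have : x = v ∨ x ≤ k := by omega
          rcases this with rfl | h; swap; omega
          exact absurd (le_par hax (by omega)) (by omega)
        · rcases Nat.eq_or_lt_of_le hxv with rfl | hxv
          · exact absurd (le_par hax (by omega)) (by omega)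
          · exact hnc ⟨v, t, x, hax, htm, by omega, hxv⟩
      have hpop' : ∀ t ∈ s, m < t → ∀ x, adj t x → x ∈ o.map Prod.fst := by
        intro t hts htm x hax
        have hx1 := (hG.2 t x hax).2.2.1
        have := hpop t hts htm x hax
        rw [ho]; simp [List.mem_range'_1]; omega
      have hdrop := pops (n := n) o m s hpop'
      set r := s.dropWhile (fun t => decide (m < t)) with hr
      have hrsub : List.Sublist r s := (List.dropWhile_suffix _).sublist
      have hrpw : r.Pairwise (· > ·) := hpw.sublist hrsub
      have hnd : v ∉ o.map Prod.fst := by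
        rw [ho]; simp only [List.mem_range'_1]; omega
      have hoext : (o.map Prod.fst) ++ [v] = List.range' 1 (k + 1) := by
        rw [ho, List.range'_1_concat]
        have hv1k : v = 1 + k := by omega
        rw [hv1k]
      by_cases hm0 : m = 0
      · -- root step
        have hrnil : r = [] := by
          rcases hrn : r with _ | ⟨t, r'⟩
          · rfl
          · exfalso
            have ht : t ∈ s := hrsub.subset (by rw [hrn]; simp)
            have h1 := dropWhile_head_le s _ _ (hr ▸ hrn)
            have := (hbd t ht).1
            omega
        rw [hrnil] at hdrop
        refine ⟨o ++ [(v, 0)], [v],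
          (hrun.trans hdrop).tail (DFSStep.root v o (by omega) (by omega) hnd), ?_, by simp, ?_, ?_⟩
        · rw [List.map_append]; exact hoext
        · intro t ht; simp at ht; omega
        · intro t x ht1 ht2 hax hkx
          rcases Nat.eq_or_lt_of_le ht2 with rfl | htk
          · simp
          · exfalso
            have hts : t ∈ s := hact t x ht1 (by omega) hax (by omega)
            exact absurd (hpop t hts (by omega) x hax) (by omega)
      · -- descend step
        obtain ⟨hmadj, hmv⟩ := par_mem adj (hm ▸ hm0)
        rw [← hm] at hmadj hmv
        have hms : m ∈ s := hact m v (by omega) (by omega) hmadj (by omega)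
        have hmr : m ∈ r := mem_dropWhile hms le_rfl
        rcases hrn : r with _ | ⟨t, r'⟩
        · rw [hrn] at hmr; simp at hmr
        · have hhead : t ≤ m := dropWhile_head_le s _ _ (hr ▸ hrn)
          have htm : t = m := by
            rw [hrn] at hmr
            rcases List.mem_cons.mp hmr with h | h
            · omega
            · have : t > m := by
                rw [hrn] at hrpw
                exact (List.pairwise_cons.mp hrpw).1 m h
              omega
          subst htm
          rw [hrn] at hdrop hrpw
          have hbd' : ∀ x ∈ m :: r', x ≤ k := by
            intro x hx
            exact (hbd x (hrsub.subset (hrn ▸ hx))).2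
          refine ⟨o ++ [(v, m)], v :: m :: r',
            (hrun.trans hdrop).tail (DFSStep.descend v m o r' hmadj hnd), ?_, ?_, ?_, ?_⟩
          · rw [List.map_append]; exact hoext
          · refine List.pairwise_cons.mpr ⟨?_, hrpw⟩
            intro a ha
            have := hbd' a ha
            omega
          · intro x hx
            rcases List.mem_cons.mp hx with rfl | hx
            · omega
            · have h1 := (hbd x (hrsub.subset (hrn ▸ hx))).1
              have h2 := hbd' x hx
              omega
          · intro a x ha1 ha2 hax hkx
            rcases Nat.eq_or_lt_of_le ha2 with rfl | hak
            · exact List.mem_cons_self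
            · have has : a ∈ s := hact a x ha1 (by omega) hax (by omega)
              right
              by_cases ham : m < a
              · exact absurd (hpop a has ham x hax) (by omega)
              · rw [← hrn]; exact mem_dropWhile has (by omega)

end AuxProof

/-- The identity labelling is a valid DFS numbering of `G` if and only if
there is no conflicting pair, i.e. no vertex `v` and edge `{u,w}` with `p(v) < u < v < w`. -/
theorem validDFS_iff_no_conflict (n : ℕ) (adj : ℕ → ℕ → Prop) (hG : IsGraphOn n adj) :
    ValidDFS n adj ↔ ¬∃ v u w, Conflict adj v u w := by
  constructor
  · rintro ⟨order, hrun, horder⟩ ⟨v, u, w, hadj, h1, h2, h3⟩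
    simp only [List.map_id] at horder
    obtain ⟨hu1, hun, hw1, hwn, huw⟩ := hG.2 u w hadj
    have hvmem : v ∈ order.map Prod.fst := by
      rw [horder]; simp only [List.mem_range'_1]; omega
    obtain ⟨b, b', hab, hstep, hb'c, hvb, hvb'⟩ := exists_push hrun hvmem (by simp)
    have hinv := inv_run hab
    have hpre' : b'.1 <+: order := run_prefix hb'c
    cases hstep with
    | root v₀ order₀ hv1 hv2 hnd =>
        have hvv : v₀ = v := by
          simp only [List.map_append] at hvb'
          rcases List.mem_append.mp hvb' with h | h
          · exact absurd h hvb
          · simp at h; omega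
        subst hvv
        have hpre : order₀.map Prod.fst ++ [v₀] <+: List.range' 1 n := by
          have := hpre'.map (Prod.fst)
          rw [horder] at this
          simpa using this
        obtain ⟨hlt, hmem⟩ := prefix_facts hpre
        have humem : u ∈ order₀.map Prod.fst := hmem u (by omega) h2
        have hw := hinv.2 u humem (by simp) w hadj
        exact absurd (hlt w hw) (by omega)
    | descend v₀ t order₀ stack₀ hadj₀ hnd =>
        have hvv : v₀ = v := by
          simp only [List.map_append] at hvb'
          rcases List.mem_append.mp hvb' with h | h
          · exact absurd h hvb
          · simp at h; omega
        subst hvv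
        have hpre : order₀.map Prod.fst ++ [v₀] <+: List.range' 1 n := by
          have := hpre'.map (Prod.fst)
          rw [horder] at this
          simpa using this
        obtain ⟨hlt, hmem⟩ := prefix_facts hpre
        have htmem : t ∈ order₀.map Prod.fst := by
          refine hinv.1.subset ?_
          simp
        have htv : t < v₀ := hlt t htmem
        have htpar : t ≤ par adj v₀ := le_par hadj₀ htv
        have humem : u ∈ order₀.map Prod.fst := hmem u (by omega) h2
        have hustk : u ∈ t :: stack₀ := by
          by_contra hc
          have hw := hinv.2 u humem hc w hadj
          exact absurd (hlt w hw) (by omega)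
        have hupw : u ∈ stack₀ := by
          rcases List.mem_cons.mp hustk with rfl | h
          · omega
          · exact h
        have hpwr : (List.range' 1 n).Pairwise (· < ·) := List.pairwise_lt_range' (s := 1) (n := n)
        have hpw2 : ((t :: stack₀).reverse).Pairwise (· < ·) :=
          hpwr.sublist (hinv.1.trans ((List.prefix_append _ [v₀]).sublist.trans hpre.sublist))
        have : u < t := by
          rw [List.pairwise_reverse] at hpw2
          exact (List.pairwise_cons.mp hpw2).1 u hupw
        omega
    | backtrack t order₀ stack₀ hall => exact absurd hvb' hvb
  · intro hnc
    obtain ⟨o, s, hrun, ho, _, hbd, _⟩ := build hG hnc n le_rfl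
    have hall : ∀ t ∈ s, 0 < t → ∀ x, adj t x → x ∈ o.map Prod.fst := by
      intro t ht _ x hx
      obtain ⟨_, _, hx1, hxn, _⟩ := hG.2 t x hx
      rw [ho]; simp only [List.mem_range'_1]; omega
    have hdrop := pops (n := n) o 0 s hall
    have hnil : s.dropWhile (fun t => decide (0 < t)) = [] := by
      rw [List.dropWhile_eq_nil_iff]
      intro x hx
      have := (hbd x hx).1
      simp; omega
    rw [hnil] at hdrop
    exact ⟨o, hrun.trans hdrop, by simp [ho]⟩
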